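/- Let N = {n_1 < n_2 < ...} be an infinite subset of ℕ and let F be a finite subset of N with |F| = k. Then GL₁(N, N \ F) ≤ τ₁({n_1, ..., n_k}) + 1. -/

import Mathlib

/-- A Schreier set: a finite set `F` of naturals that is empty or satisfies `|F| ≤ min F`. -/
def IsSchreier (F : Finset ℕ) : Prop := ∀ h : F.Nonempty, F.card ≤ F.min' h

/-- `F < G` for finite sets of naturals: every element of `F` is below every element of `G`. -/
def FinsetLT (F G : Finset ℕ) : Prop := ∀ a ∈ F, ∀ b ∈ G, a < b

/-- `A` can be covered by `m` consecutive Schreier sets `F 0 < F 1 < ⋯ < F (m-1)`. -/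
def IsChainCover (A : Finset ℕ) (m : ℕ) : Prop :=
  ∃ F : Fin m → Finset ℕ, (∀ i, IsSchreier (F i)) ∧
    (∀ i j : Fin m, i < j → FinsetLT (F i) (F j)) ∧ ∀ a ∈ A, ∃ i, a ∈ F i

/-- The Schreier covering number `τ₁(A)`: the least number of consecutive Schreier sets
needed to cover the finite set `A` (with `τ₁(∅) = 0`). -/
noncomputable def tau1 (A : Finset ℕ) : ℕ := sInf {m | IsChainCover A m}

/-- `M(J)`: the elements of the infinite set `M` whose index (position, counted from `0`,
in the increasing enumeration of `M`) belongs to the finite set `J`. -/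
noncomputable def idxImage (M : Set ℕ) (J : Finset ℕ) : Finset ℕ :=
  J.image (Nat.nth (· ∈ M))

/-- The Gasparis–Leung index `GL₁(M,N) = sup {τ₁(M(J)) : J finite, N(J) ∈ S₁} ∈ ℕ ∪ {∞}`. -/
noncomputable def GL1 (M N : Set ℕ) : ℕ∞ :=
  ⨆ J ∈ {J : Finset ℕ | IsSchreier (idxImage N J)}, (tau1 (idxImage M J) : ℕ∞)

section helpers
attribute [local instance] Classical.propDecidable

lemma isSchreier_singleton {x : ℕ} (hx : 0 < x) : IsSchreier {x} := by
  intro h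
  simp only [Finset.card_singleton, Finset.min'_singleton]
  exact hx

lemma chainCover_card {A : Finset ℕ} (h0 : 0 ∉ A) : IsChainCover A A.card := by
  set e := A.orderIsoOfFin rfl with he
  refine ⟨fun i => {(e i : ℕ)}, ?_, ?_, ?_⟩
  · intro i
    exact isSchreier_singleton (Nat.pos_of_ne_zero (fun h => h0 (h ▸ (e i).2)))
  · intro i j hij a ha b hb
    simp only [Finset.mem_singleton] at ha hb
    subst ha; subst hb
    exact_mod_cast (e.lt_iff_lt.mpr hij)
  · intro a ha
    refine ⟨e.symm ⟨a, ha⟩, ?_⟩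
    simp

lemma tau1_cover {A : Finset ℕ} (h0 : 0 ∉ A) : IsChainCover A (tau1 A) :=
  Nat.sInf_mem (⟨A.card, chainCover_card h0⟩ : {m | IsChainCover A m}.Nonempty)

lemma tau1_le {A : Finset ℕ} {m : ℕ} (h : IsChainCover A m) : tau1 A ≤ m :=
  Nat.sInf_le (h : _ ∈ {m | IsChainCover A m})

lemma count_mono_pred {p q : ℕ → Prop} [DecidablePred p] [DecidablePred q]
    (h : ∀ x, p x → q x) (y : ℕ) : Nat.count p y ≤ Nat.count q y := by
  rw [Nat.count_eq_card_filter_range, Nat.count_eq_card_filter_range]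
  exact Finset.card_le_card (fun x hx => by simp only [Finset.mem_filter] at hx ⊢; exact ⟨hx.1, h x hx.2⟩)

lemma count_diff_le (N : Set ℕ) (F : Finset ℕ) (y : ℕ) [DecidablePred (· ∈ N)]
    [DecidablePred (· ∈ N \ (↑F : Set ℕ))] :
    Nat.count (· ∈ N) y ≤ Nat.count (· ∈ N \ ↑F) y + F.card := by
  rw [Nat.count_eq_card_filter_range, Nat.count_eq_card_filter_range]
  calc (Finset.filter (· ∈ N) (Finset.range y)).card
      ≤ ((Finset.filter (· ∈ N \ ↑F) (Finset.range y)) ∪ F).card := by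
        apply Finset.card_le_card
        intro x hx
        simp only [Finset.mem_filter, Finset.mem_range] at hx
        by_cases hxF : x ∈ F
        · exact Finset.mem_union_right _ hxF
        · exact Finset.mem_union_left _ (by simp [Finset.mem_filter, hx.1, hx.2, Set.mem_diff, hxF])
    _ ≤ _ := Finset.card_union_le _ _

lemma nth_diff_le (N : Set ℕ) (hN : N.Infinite) (F : Finset ℕ) {j : ℕ} (hj : F.card ≤ j) :
    Nat.nth (· ∈ N \ ↑F) (j - F.card) ≤ Nat.nth (· ∈ N) j := by
  have hq : (setOf (· ∈ N \ ↑F)).Infinite := by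
    exact hN.diff F.finite_toSet
  rw [← Nat.lt_succ_iff, ← Nat.lt_nth_iff_count_lt hq, Nat.succ_eq_add_one]
  have h1 : Nat.count (· ∈ N) (Nat.nth (· ∈ N) j + 1) = j + 1 :=
    Nat.count_nth_succ_of_infinite (by simpa using hN) j
  have h2 := count_diff_le N F (Nat.nth (· ∈ N) j + 1)
  omega

end helpers

lemma main_le (N : Set ℕ) (hN : N.Infinite) (hN0 : 0 ∉ N) (F J : Finset ℕ)
    (hS : IsSchreier (idxImage (N \ ↑F) J)) :
    tau1 (idxImage N J) ≤ tau1 (idxImage N (Finset.range F.card)) + 1 := by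
  classical
  set k := F.card with hk
  set m := J.card with hm
  have hN' : (setOf (· ∈ N)).Infinite := by exact hN
  have hq : (setOf (· ∈ N \ ↑F)).Infinite := by exact hN.diff F.finite_toSet
  set e' : ℕ → ℕ := fun t => if h : t < m then ((J.orderIsoOfFin rfl) ⟨t, h⟩ : ℕ) else 0 with he'
  have hmem : ∀ t, t < m → e' t ∈ J := by
    intro t h
    simp only [he', dif_pos h]
    exact ((J.orderIsoOfFin rfl) ⟨t, h⟩).2
  have hlt : ∀ s t, s < t → t < m → e' s < e' t := by
    intro s t hst ht
    have hs : s < m := hst.trans ht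
    simp only [he', dif_pos hs, dif_pos ht]
    exact_mod_cast (J.orderIsoOfFin rfl).lt_iff_lt.mpr (Fin.mk_lt_mk.mpr hst)
  have hsurj : ∀ x ∈ J, ∃ t, ∃ _ : t < m, e' t = x := by
    intro x hx
    set i := (J.orderIsoOfFin rfl).symm ⟨x, hx⟩ with hi
    refine ⟨i, i.isLt, ?_⟩
    simp only [he', dif_pos i.isLt]
    have h1 : (⟨(i : ℕ), i.isLt⟩ : Fin m) = i := by ext; rfl
    rw [dif_pos (show (i : ℕ) < m from i.isLt), h1, hi, OrderIso.apply_symm_apply]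
  have hbase : ∀ t, t < m → e' 0 + t ≤ e' t := by
    intro t
    induction t with
    | zero => intro _; omega
    | succ n ih =>
      intro h
      have h1 := ih (by omega)
      have h2 := hlt n (n + 1) (by omega) h
      omega
  have hself : ∀ t, t < m → t ≤ e' t := by
    intro t ht
    have := hbase t ht
    omega
  have hcard : 0 < m → m ≤ Nat.nth (· ∈ N \ ↑F) (e' 0) := by
    intro h0
    have hJne : J.Nonempty := Finset.card_pos.mp h0
    have hSne : (idxImage (N \ ↑F) J).Nonempty := hJne.image _
    have h1 : (idxImage (N \ ↑F) J).card = m :=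
      Finset.card_image_of_injective _ (Nat.nth_injective hq)
    have h2 := hS hSne
    have h3 : (idxImage (N \ ↑F) J).min' hSne ≤ Nat.nth (· ∈ N \ ↑F) (e' 0) :=
      Finset.min'_le _ _ (Finset.mem_image_of_mem _ (hmem 0 h0))
    omega
  have hB0 : 0 ∉ idxImage N (Finset.range k) := by
    intro h
    simp only [idxImage, Finset.mem_image] at h
    obtain ⟨t, _, ht⟩ := h
    exact hN0 (ht ▸ Nat.nth_mem_of_infinite hN' t)
  have hcov := tau1_cover hB0
  set p := tau1 (idxImage N (Finset.range k)) with hp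
  obtain ⟨G, hGs, hGlt, hGcov⟩ := hcov
  set a' : ℕ → ℕ := fun t => Nat.nth (· ∈ N) (e' t) with ha'
  apply tau1_le
  refine ⟨fun i =>
    if h : (i : ℕ) < p then
      ((Finset.range (min k m)).filter (fun t => Nat.nth (· ∈ N) t ∈ G ⟨i, h⟩)).image a'
    else ((Finset.range m).filter (fun t => k ≤ t)).image a', ?_, ?_, ?_⟩
  · -- Schreier
    intro i hne
    by_cases hi : (i : ℕ) < p
    · simp only [dif_pos hi] at hne ⊢
      obtain ⟨t₀, ht₀V, ht₀⟩ := Finset.mem_image.mp (Finset.min'_mem _ hne)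
      obtain ⟨ht₀r, ht₀G⟩ := Finset.mem_filter.mp ht₀V
      have ht₀m : t₀ < m := (lt_min_iff.mp (Finset.mem_range.mp ht₀r)).2
      rw [← ht₀]
      refine le_trans Finset.card_image_le (le_trans
        (Finset.card_le_card_of_injOn (Nat.nth (· ∈ N))
          (fun t htV => (Finset.mem_filter.mp htV).2) ((Nat.nth_injective hN').injOn)) ?_)
      exact le_trans (hGs _ ⟨_, ht₀G⟩) (le_trans (Finset.min'_le _ _ ht₀G)
        (Nat.nth_monotone hN' (hself t₀ ht₀m)))
    · simp only [dif_neg hi] at hne ⊢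
      obtain ⟨t₀, ht₀V, ht₀⟩ := Finset.mem_image.mp (Finset.min'_mem _ hne)
      obtain ⟨ht₀r, ht₀k⟩ := Finset.mem_filter.mp ht₀V
      have ht₀m : t₀ < m := Finset.mem_range.mp ht₀r
      rw [← ht₀]
      refine le_trans Finset.card_image_le (le_trans (Finset.card_filter_le _ _) ?_)
      rw [Finset.card_range]
      have h0m : 0 < m := by omega
      have hc0 := hcard h0m
      have hd1 : Nat.nth (· ∈ N \ ↑F) (e' t₀ - k) ≤ Nat.nth (· ∈ N) (e' t₀) :=
        nth_diff_le N hN F (le_trans ht₀k (hself t₀ ht₀m))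
      have hd2 : Nat.nth (· ∈ N \ ↑F) (e' 0) ≤ Nat.nth (· ∈ N \ ↑F) (e' t₀ - k) := by
        apply Nat.nth_monotone hq
        have := hbase t₀ ht₀m
        omega
      calc m ≤ Nat.nth (· ∈ N \ ↑F) (e' 0) := hc0
        _ ≤ Nat.nth (· ∈ N \ ↑F) (e' t₀ - k) := hd2
        _ ≤ a' t₀ := hd1
  · -- FinsetLT
    intro i j hij x hx y hy
    have hij' : (i : ℕ) < (j : ℕ) := hij
    have hjp : (j : ℕ) ≤ p := Nat.lt_succ_iff.mp j.isLt
    have hi : (i : ℕ) < p := by omega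
    simp only [dif_pos hi] at hx
    obtain ⟨t, htV, rfl⟩ := Finset.mem_image.mp hx
    simp only [Finset.mem_filter, Finset.mem_range, lt_min_iff] at htV
    by_cases hj : (j : ℕ) < p
    · simp only [dif_pos hj] at hy
      obtain ⟨s, hsV, rfl⟩ := Finset.mem_image.mp hy
      simp only [Finset.mem_filter, Finset.mem_range, lt_min_iff] at hsV
      have h1 : Nat.nth (· ∈ N) t < Nat.nth (· ∈ N) s :=
        hGlt ⟨i, hi⟩ ⟨j, hj⟩ (Fin.mk_lt_mk.mpr hij') _ htV.2 _ hsV.2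
      have h2 : t < s := (Nat.nth_lt_nth hN').mp h1
      exact (Nat.nth_lt_nth hN').mpr (hlt t s h2 hsV.1.2)
    · simp only [dif_neg hj] at hy
      obtain ⟨s, hsV, rfl⟩ := Finset.mem_image.mp hy
      simp only [Finset.mem_filter, Finset.mem_range] at hsV
      have h2 : t < s := by omega
      exact (Nat.nth_lt_nth hN').mpr (hlt t s h2 hsV.1)
  · -- cover
    intro x hx
    simp only [idxImage, Finset.mem_image] at hx
    obtain ⟨y, hyJ, rfl⟩ := hx
    obtain ⟨t, htm, rfl⟩ := hsurj y hyJ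
    by_cases htk : t < k
    · have hmemB : Nat.nth (· ∈ N) t ∈ idxImage N (Finset.range k) :=
        Finset.mem_image_of_mem _ (Finset.mem_range.mpr htk)
      obtain ⟨i, hiG⟩ := hGcov _ hmemB
      refine ⟨⟨(i : ℕ), i.isLt.trans (Nat.lt_succ_self p)⟩, ?_⟩
      simp only [dif_pos i.isLt]
      refine Finset.mem_image_of_mem a' ?_
      simp only [Finset.mem_filter, Finset.mem_range, lt_min_iff]
      exact ⟨⟨htk, htm⟩, hiG⟩
    · refine ⟨Fin.last p, ?_⟩
      simp only [Fin.val_last, dif_neg (lt_irrefl p)]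
      refine Finset.mem_image_of_mem a' ?_
      simp only [Finset.mem_filter, Finset.mem_range]
      omega

/-- For an infinite set `N = {n_1 < n_2 < ⋯} ⊆ {1,2,...}` and a finite subset `F` of `N`
with `|F| = k`, one has `GL₁(N, N \ F) ≤ τ₁({n_1, …, n_k}) + 1`. -/
theorem GL1_diff_le (N : Set ℕ) (hN : N.Infinite) (hN0 : 0 ∉ N)
    (F : Finset ℕ) (hF : ↑F ⊆ N) :
    GL1 N (N \ ↑F) ≤ (tau1 (idxImage N (Finset.range F.card)) : ℕ∞) + 1 := by
  apply iSup₂_le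
  intro J hJ
  exact_mod_cast main_le N hN hN0 F J hJ
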